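/- Let n ≥ 1 and let η₁, …, ηₙ be nonnegative real numbers with Σ_{i=1}^n ηᵢ ≤ 1. For k = 1, …, n let S_k denote the k-th elementary symmetric polynomial of η₁, …, ηₙ. Then 1 + Σ_{k=1}^n (−1)ᵏ 2^{k−1} S_k ≥ 0. -/

import Mathlib

open Finset

/-- The `k`-th elementary symmetric polynomial of `η₁, …, ηₙ`. -/
def esym (n : ℕ) (η : Fin n → ℝ) (k : ℕ) : ℝ :=
  ∑ t ∈ Finset.univ.powersetCard k, ∏ i ∈ t, η i

lemma prod_one_sub_two (n : ℕ) (η : Fin n → ℝ) :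
    ∏ i, (1 - 2 * η i) = ∑ k ∈ Finset.range (n + 1), (-2 : ℝ) ^ k * esym n η k := by
  have h : ∀ i : Fin n, (1 : ℝ) - 2 * η i = (-2 * η i) + 1 := fun i => by ring
  simp_rw [h]
  rw [Finset.prod_add]
  rw [Finset.sum_powerset]
  rw [Finset.card_univ, Fintype.card_fin]
  refine Finset.sum_congr rfl fun k _ => ?_
  rw [esym, Finset.mul_sum]
  refine Finset.sum_congr rfl fun t ht => ?_
  rw [Finset.prod_const_one, mul_one, Finset.prod_mul_distrib, Finset.prod_const,
    (Finset.mem_powersetCard.mp ht).2]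

/-- For nonnegative `η₁,…,ηₙ` with `∑ ηᵢ ≤ 1`,
`1 + ∑_{k=1}^n (−1)ᵏ 2^{k−1} S_k ≥ 0`. -/
theorem alternating_esym_sum_nonneg (n : ℕ) (hn : 1 ≤ n) (η : Fin n → ℝ)
    (hη : ∀ i, 0 ≤ η i) (hsum : ∑ i, η i ≤ 1) :
    0 ≤ 1 + ∑ k ∈ Finset.Icc 1 n, (-1 : ℝ) ^ k * 2 ^ (k - 1) * esym n η k := by
  have hprod : -1 ≤ ∏ i, (1 - 2 * η i) := by
    have habs : |∏ i, (1 - 2 * η i)| ≤ 1 := by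
      rw [Finset.abs_prod]
      calc ∏ i, |1 - 2 * η i| ≤ ∏ i : Fin n, 1 := by
            refine Finset.prod_le_prod (fun i _ => abs_nonneg _) fun i _ => ?_
            rw [abs_le]
            have hi : η i ≤ 1 := le_trans (Finset.single_le_sum
              (fun j _ => hη j) (Finset.mem_univ i)) hsum
            constructor <;> nlinarith [hη i]
        _ = 1 := by simp
    linarith [abs_le.mp habs]
  have key : ∑ k ∈ Finset.Icc 1 n, (-1 : ℝ) ^ k * 2 ^ (k - 1) * esym n η k
      = (1 / 2) * (∏ i, (1 - 2 * η i) - 1) := by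
    rw [prod_one_sub_two]
    have h0 : esym n η 0 = 1 := by simp [esym]
    have : ∑ k ∈ Finset.range (n + 1), (-2 : ℝ) ^ k * esym n η k
        = 1 + ∑ k ∈ Finset.Icc 1 n, (-2 : ℝ) ^ k * esym n η k := by
      rw [Finset.range_eq_Ico, Finset.sum_eq_sum_Ico_succ_bot (by omega : 0 < n + 1)]
      rw [h0]
      norm_num
      rw [show Finset.Ico 1 (n + 1) = Finset.Icc 1 n from rfl]
    rw [this, add_sub_cancel_left, Finset.mul_sum]
    refine Finset.sum_congr rfl fun k hk => ?_
    obtain ⟨m, rfl⟩ : ∃ m, k = m + 1 := ⟨k - 1, by have := (Finset.mem_Icc.mp hk).1; omega⟩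
    simp only [Nat.add_sub_cancel]
    rw [show ((-2 : ℝ)) ^ (m + 1) = (-1) ^ (m + 1) * 2 ^ (m + 1) by
      rw [← neg_one_mul, mul_pow]]
    ring
  rw [key]
  linarith
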